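/- The function δ(a,b) = sqrt(1 - |⟨k_a,k_b⟩|²/(‖k_a‖²·‖k_b‖²)) on X × X, where k_w are the kernel functions of a reproducing kernel Hilbert space with all k_w ≠ 0 and {k_a,k_b} linearly independent for a ≠ b, is a metric on X. -/

import Mathlib

open scoped ComplexConjugate

local notation "⟪" x ", " y "⟫" => @inner ℂ _ _ x y

private lemma rkhs_aux_scalar (x y z : ℝ) (hx0 : 0 ≤ x) (hx1 : x ≤ 1)
    (hy0 : 0 ≤ y) (hy1 : y ≤ 1) (hz0 : 0 ≤ z) (hz1 : z ≤ 1)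
    (h : x * y - Real.sqrt (1 - x ^ 2) * Real.sqrt (1 - y ^ 2) ≤ z) :
    Real.sqrt (1 - z ^ 2) ≤ Real.sqrt (1 - x ^ 2) + Real.sqrt (1 - y ^ 2) := by
  set s := Real.sqrt (1 - x ^ 2) with hsdef
  set t := Real.sqrt (1 - y ^ 2) with htdef
  have hs0 : 0 ≤ s := Real.sqrt_nonneg _
  have ht0 : 0 ≤ t := Real.sqrt_nonneg _
  have hs : s ^ 2 = 1 - x ^ 2 := Real.sq_sqrt (by nlinarith)
  have ht : t ^ 2 = 1 - y ^ 2 := Real.sq_sqrt (by nlinarith)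
  have key : 1 - z ^ 2 ≤ (s + t) ^ 2 := by
    rcases le_or_gt 1 ((s + t) ^ 2) with hc | hc
    · nlinarith [sq_nonneg z]
    · have hst : s * t ≤ x * y := by
        nlinarith [mul_nonneg hx0 hy0, mul_nonneg hs0 ht0, mul_nonneg hs0 ht0,
          sq_nonneg (x * y - s * t), sq_nonneg (x * y + s * t), sq_nonneg (s - t)]
      have hz2 : (x * y - s * t) ^ 2 ≤ z ^ 2 := by nlinarith [mul_nonneg hs0 ht0]
      nlinarith [sq_nonneg (s * y + x * t), mul_nonneg hs0 ht0,
        mul_nonneg (mul_nonneg hs0 ht0) (mul_nonneg hx0 hy0),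
        mul_nonneg hs0 hy0, mul_nonneg hx0 ht0,
        mul_nonneg (mul_nonneg hs0 hy0) (mul_nonneg hx0 ht0)]
  calc Real.sqrt (1 - z ^ 2) ≤ Real.sqrt ((s + t) ^ 2) := Real.sqrt_le_sqrt key
    _ = s + t := Real.sqrt_sq (by positivity)

private lemma rkhs_aux_tri {H : Type*} [NormedAddCommGroup H] [InnerProductSpace ℂ H]
    (u v w : H) (hu : ‖u‖ = 1) (hv : ‖v‖ = 1) (hw : ‖w‖ = 1) :
    Real.sqrt (1 - ‖⟪u, w⟫‖ ^ 2) ≤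
      Real.sqrt (1 - ‖⟪u, v⟫‖ ^ 2) + Real.sqrt (1 - ‖⟪v, w⟫‖ ^ 2) := by
  set p : ℂ := ⟪v, u⟫ with hp
  set q : ℂ := ⟪v, w⟫ with hq
  have hvv : ⟪v, v⟫ = 1 := by
    rw [inner_self_eq_norm_sq_to_K, hv]; norm_num
  set u' : H := u - p • v with hu'
  set w' : H := w - q • v with hw'
  have hdecomp : ⟪u, w⟫ = conj p * q + ⟪u', w'⟫ := by
    have : ⟪u', w'⟫ = ⟪u, w⟫ - conj p * q := by
      simp only [hu', hw', inner_sub_left, inner_sub_right, inner_smul_left,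
        inner_smul_right, hvv, mul_one]
      have h1 : ⟪u, v⟫ = conj p := by rw [hp, inner_conj_symm]
      rw [h1]
      ring
    rw [this]; ring
  have hnu' : ‖u'‖ ^ 2 = 1 - ‖p‖ ^ 2 := by
    have := @norm_sub_sq ℂ _ _ _ _ u (p • v)
    simp only [inner_smul_right, norm_smul, hv, mul_one, hu] at this
    rw [hu', this]
    have : RCLike.re (p * ⟪u, v⟫) = ‖p‖ ^ 2 := by
      rw [show ⟪u, v⟫ = conj p by rw [hp, inner_conj_symm], Complex.mul_conj]
      simp [Complex.normSq_eq_norm_sq]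
      rw [← Complex.ofReal_pow, Complex.ofReal_re]
    rw [this]; ring
  have hnw' : ‖w'‖ ^ 2 = 1 - ‖q‖ ^ 2 := by
    have := @norm_sub_sq ℂ _ _ _ _ w (q • v)
    simp only [inner_smul_right, norm_smul, hv, mul_one, hw] at this
    rw [hw', this]
    have : RCLike.re (q * ⟪w, v⟫) = ‖q‖ ^ 2 := by
      rw [show ⟪w, v⟫ = conj q by rw [hq, inner_conj_symm], Complex.mul_conj]
      simp [Complex.normSq_eq_norm_sq]
      rw [← Complex.ofReal_pow, Complex.ofReal_re]
    rw [this]; ring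
  have hpx : ‖⟪u, v⟫‖ = ‖p‖ := by rw [hp, norm_inner_symm]
  have hqy : ‖⟪v, w⟫‖ = ‖q‖ := by rw [hq]
  have hp1 : ‖p‖ ≤ 1 := by
    have := norm_inner_le_norm (𝕜 := ℂ) v u; rwa [hu, hv, one_mul] at this
  have hq1 : ‖q‖ ≤ 1 := by
    have := norm_inner_le_norm (𝕜 := ℂ) v w; rwa [hw, hv, one_mul] at this
  have hz1 : ‖⟪u, w⟫‖ ≤ 1 := by
    have := norm_inner_le_norm (𝕜 := ℂ) u w; rwa [hu, hw, one_mul] at this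
  have hnu'' : ‖u'‖ = Real.sqrt (1 - ‖p‖ ^ 2) := by
    rw [← hnu', Real.sqrt_sq (norm_nonneg _)]
  have hnw'' : ‖w'‖ = Real.sqrt (1 - ‖q‖ ^ 2) := by
    rw [← hnw', Real.sqrt_sq (norm_nonneg _)]
  have hlow : ‖p‖ * ‖q‖ - Real.sqrt (1 - ‖p‖ ^ 2) * Real.sqrt (1 - ‖q‖ ^ 2)
      ≤ ‖⟪u, w⟫‖ := by
    have h1 : ‖conj p * q‖ - ‖⟪u', w'⟫‖ ≤ ‖conj p * q + ⟪u', w'⟫‖ := by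
      have h0 := norm_sub_le (conj p * q + ⟪u', w'⟫) ⟪u', w'⟫
      simp only [add_sub_cancel_right] at h0
      linarith
    have h2 : ‖conj p * q‖ = ‖p‖ * ‖q‖ := by
      rw [norm_mul, RCLike.norm_conj]
    have h3 : ‖⟪u', w'⟫‖ ≤ ‖u'‖ * ‖w'‖ := norm_inner_le_norm _ _
    rw [hdecomp, ← hnu'', ← hnw'']
    calc ‖p‖ * ‖q‖ - ‖u'‖ * ‖w'‖ ≤ ‖conj p * q‖ - ‖⟪u', w'⟫‖ := by
          rw [h2]; linarith
      _ ≤ _ := h1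
  rw [hpx, hqy]
  exact rkhs_aux_scalar ‖p‖ ‖q‖ ‖⟪u, w⟫‖ (norm_nonneg _) hp1 (norm_nonneg _) hq1
    (norm_nonneg _) hz1 hlow

/-- In a reproducing kernel Hilbert space on `X` with all kernel functions nonzero and
`k_a, k_b` linearly independent for `a ≠ b`, the function
`δ(a,b) = sqrt (1 - |⟨k_a,k_b⟩|²/(‖k_a‖²‖k_b‖²))` is a metric on `X`. -/
theorem rkhs_delta_is_metric
    {H : Type*} [NormedAddCommGroup H] [InnerProductSpace ℂ H]
    {X : Type*} (kk : X → H)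
    (hk0 : ∀ a, kk a ≠ 0)
    (hli : ∀ a b : X, a ≠ b → LinearIndependent ℂ ![kk a, kk b]) :
    let δ : X → X → ℝ := fun a b =>
      Real.sqrt (1 - ‖(inner ℂ (kk a) (kk b) : ℂ)‖^2 / (‖kk a‖^2 * ‖kk b‖^2))
    (∀ a b : X, δ a b = 0 ↔ a = b) ∧
      (∀ a b : X, δ a b = δ b a) ∧
      (∀ a b c : X, δ a c ≤ δ a b + δ b c) := by
  intro δ
  have hnorm : ∀ a, (0:ℝ) < ‖kk a‖ := fun a => norm_pos_iff.mpr (hk0 a)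
  -- normalized kernels
  set ℓ : X → H := fun a => (‖kk a‖ : ℂ)⁻¹ • kk a with hℓ
  have hℓ1 : ∀ a, ‖ℓ a‖ = 1 := fun a => by
    rw [hℓ]; simp only [norm_smul, norm_inv, Complex.norm_real, norm_norm]
    exact inv_mul_cancel₀ (hnorm a).ne'
  have hinner : ∀ a b, ‖⟪ℓ a, ℓ b⟫‖ ^ 2 =
      ‖⟪kk a, kk b⟫‖ ^ 2 / (‖kk a‖ ^ 2 * ‖kk b‖ ^ 2) := by
    intro a b
    have : ⟪ℓ a, ℓ b⟫ = conj (‖kk a‖ : ℂ)⁻¹ * ((‖kk b‖ : ℂ)⁻¹ * ⟪kk a, kk b⟫) := by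
      rw [hℓ]; simp [inner_smul_left, inner_smul_right]; ring
    rw [this]
    simp only [norm_mul, norm_inv, RCLike.norm_conj, Complex.norm_real, norm_norm]
    field_simp
  have hδ : ∀ a b, δ a b = Real.sqrt (1 - ‖⟪ℓ a, ℓ b⟫‖ ^ 2) := by
    intro a b; rw [hinner]
  refine ⟨?_, ?_, ?_⟩
  · intro a b
    constructor
    · intro h
      by_contra hab
      have hCS : ‖⟪kk a, kk b⟫‖ < ‖kk a‖ * ‖kk b‖ := by
        rcases lt_or_eq_of_le (norm_inner_le_norm (𝕜 := ℂ) (kk a) (kk b)) with h' | h'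
        · exact h'
        · exfalso
          obtain ⟨r, _, hr⟩ := (norm_inner_eq_norm_iff (hk0 a) (hk0 b)).mp h'
          have := (linearIndependent_fin2.mp (hli b a (Ne.symm hab))).2 r
          simp only [Matrix.cons_val_one, Matrix.head_cons, Matrix.cons_val_zero] at this
          exact this hr.symm
      have hpos : 0 < 1 - ‖⟪kk a, kk b⟫‖ ^ 2 / (‖kk a‖ ^ 2 * ‖kk b‖ ^ 2) := by
        have h2 : ‖⟪kk a, kk b⟫‖ ^ 2 < ‖kk a‖ ^ 2 * ‖kk b‖ ^ 2 := by
          have := mul_self_lt_mul_self (norm_nonneg _) hCS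
          nlinarith [norm_nonneg (⟪kk a, kk b⟫)]
        rw [sub_pos, div_lt_one (by have := hnorm a; have := hnorm b; positivity)]
        exact h2
      have : δ a b > 0 := Real.sqrt_pos.mpr hpos
      linarith [h ▸ this]
    · rintro rfl
      have : ⟪kk a, kk a⟫ = (‖kk a‖ : ℂ) ^ 2 := by
        rw [inner_self_eq_norm_sq_to_K]; norm_num
      show Real.sqrt _ = 0
      rw [this]
      simp only [norm_pow, Complex.norm_real, norm_norm]
      rw [show (‖kk a‖ ^ 2) ^ 2 = ‖kk a‖ ^ 2 * ‖kk a‖ ^ 2 by ring,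
        div_self (by have := hnorm a; positivity), sub_self, Real.sqrt_zero]
  · intro a b
    show Real.sqrt _ = Real.sqrt _
    rw [norm_inner_symm, mul_comm]
  · intro a b c
    rw [hδ a c, hδ a b, hδ b c]
    exact rkhs_aux_tri (ℓ a) (ℓ b) (ℓ c) (hℓ1 a) (hℓ1 b) (hℓ1 c)
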